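/- For the Poisson pmf p with parameter λ > 0, the quantity |Δ⁺p(k)·(1 - P(k))/(p(k)·p(k+1))| is bounded in k; in particular, for every k with λ/(k+2) < 1, it is at most |λ/(k+1) - 1| · 1/(1 - λ/(k+2)). -/
import Mathlib

/-- Condition (C2) for the Poisson distribution: `|Δ⁺p(k)(1-P(k))/(p(k)p(k+1))|` is bounded,
and for `λ/(k+2) < 1` it is at most `|λ/(k+1)-1| / (1 - λ/(k+2))`. -/
theorem stmt_6 (lam : ℝ) (hlam : 0 < lam) (p : ℕ → ℝ) (P : ℕ → ℝ)
    (hp : ∀ k : ℕ, p k = Real.exp (-lam) * lam ^ k / (Nat.factorial k : ℝ))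
    (hP : ∀ k : ℕ, P k = ∑ ℓ ∈ Finset.range (k + 1), p ℓ) :
    (∃ M : ℝ, ∀ k : ℕ, |(p (k + 1) - p k) * (1 - P k) / (p k * p (k + 1))| ≤ M) ∧
    (∀ k : ℕ, lam / (k + 2) < 1 →
      |(p (k + 1) - p k) * (1 - P k) / (p k * p (k + 1))|
        ≤ |lam / (k + 1) - 1| * (1 / (1 - lam / (k + 2)))) := by
  have hpos : ∀ k, 0 < p k := by
    intro k; rw [hp]
    have : (0:ℝ) < (Nat.factorial k : ℝ) := by exact_mod_cast Nat.factorial_pos k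
    positivity
  have hsucc : ∀ k : ℕ, p (k+1) = p k * (lam / (k+1)) := by
    intro k
    rw [hp, hp, Nat.factorial_succ]
    have h1 : ((k:ℝ)+1) ≠ 0 := by positivity
    have h2 : (Nat.factorial k : ℝ) ≠ 0 := by exact_mod_cast (Nat.factorial_pos k).ne'
    push_cast
    field_simp
    ring
  have hsum : Summable p := by
    refine ((Real.summable_pow_div_factorial lam).mul_left (Real.exp (-lam))).congr fun k => ?_
    rw [hp]; ring
  have hexp : ∑' n : ℕ, lam ^ n / (Nat.factorial n : ℝ) = Real.exp lam := by
    rw [Real.exp_eq_exp_ℝ, NormedSpace.exp_eq_tsum_div]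
  have htot : ∑' k, p k = 1 := by
    have h1 : ∑' k, p k = Real.exp (-lam) * ∑' n : ℕ, lam ^ n / (Nat.factorial n : ℝ) := by
      rw [← tsum_mul_left]
      exact tsum_congr fun k => by rw [hp]; ring
    rw [h1, hexp, ← Real.exp_add]
    simp
  have htail : ∀ k, 1 - P k = ∑' ℓ : ℕ, p (ℓ + (k+1)) := by
    intro k
    have h := Summable.sum_add_tsum_nat_add (k+1) hsum
    rw [htot] at h
    rw [hP]
    linarith [h]
  have htail_nonneg : ∀ k, 0 ≤ 1 - P k := by
    intro k
    rw [htail]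
    exact tsum_nonneg fun ℓ => (hpos _).le
  have hshift : ∀ k : ℕ, Summable fun ℓ : ℕ => p (ℓ + (k+1)) := by
    intro k
    exact (summable_nat_add_iff (k+1)).mpr hsum
  -- uniform bound on tail ratio
  have key1 : ∀ k ℓ : ℕ, p (ℓ + (k+1)) ≤ p (k+1) * (lam ^ ℓ / (Nat.factorial ℓ : ℝ)) := by
    intro k ℓ
    rw [hp, hp, div_mul_div_comm]
    have hnum : Real.exp (-lam) * lam ^ (ℓ + (k+1)) = Real.exp (-lam) * lam ^ (k+1) * lam ^ ℓ := by
      rw [pow_add]; ring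
    rw [hnum]
    have hd : ((Nat.factorial (k+1) : ℝ) * (Nat.factorial ℓ : ℝ)) ≤ (Nat.factorial (ℓ + (k+1)) : ℝ) := by
      have := Nat.le_of_dvd (Nat.factorial_pos (k+1+ℓ)) (Nat.factorial_mul_factorial_dvd_factorial_add (k+1) ℓ)
      rw [add_comm ℓ (k+1)]
      exact_mod_cast this
    have hpos1 : (0:ℝ) < (Nat.factorial (k+1) : ℝ) * (Nat.factorial ℓ : ℝ) := by
      have h1 : (0:ℝ) < (Nat.factorial (k+1) : ℝ) := by exact_mod_cast Nat.factorial_pos (k+1)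
      have h2 : (0:ℝ) < (Nat.factorial ℓ : ℝ) := by exact_mod_cast Nat.factorial_pos ℓ
      positivity
    have hnn : 0 ≤ Real.exp (-lam) * lam ^ (k+1) * lam ^ ℓ := by positivity
    exact div_le_div_of_nonneg_left hnn hpos1 hd
  have key2 : ∀ k ℓ : ℕ, p (ℓ + (k+1)) ≤ p (k+1) * (lam / ((k:ℝ)+2)) ^ ℓ := by
    intro k ℓ
    rw [hp, hp, div_pow, div_mul_div_comm]
    have hnum : Real.exp (-lam) * lam ^ (ℓ + (k+1)) = Real.exp (-lam) * lam ^ (k+1) * lam ^ ℓ := by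
      rw [pow_add]; ring
    rw [hnum]
    have hd : ((Nat.factorial (k+1) : ℝ) * ((k:ℝ)+2) ^ ℓ) ≤ (Nat.factorial (ℓ + (k+1)) : ℝ) := by
      have h := Nat.factorial_mul_pow_le_factorial (m := k+1) (n := ℓ)
      have h2 : ((Nat.factorial (k+1) * (k+2) ^ ℓ : ℕ) : ℝ) ≤ ((Nat.factorial (k+1+ℓ) : ℕ) : ℝ) := by
        exact_mod_cast h
      rw [add_comm ℓ (k+1)]
      push_cast at h2 ⊢
      linarith [h2]
    have hpos1 : (0:ℝ) < (Nat.factorial (k+1) : ℝ) * ((k:ℝ)+2) ^ ℓ := by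
      have h1 : (0:ℝ) < (Nat.factorial (k+1) : ℝ) := by exact_mod_cast Nat.factorial_pos (k+1)
      positivity
    have hnn : 0 ≤ Real.exp (-lam) * lam ^ (k+1) * lam ^ ℓ := by positivity
    exact div_le_div_of_nonneg_left hnn hpos1 hd
  have hbound1 : ∀ k, 1 - P k ≤ p (k+1) * Real.exp lam := by
    intro k
    rw [htail]
    calc ∑' ℓ : ℕ, p (ℓ + (k+1))
        ≤ ∑' ℓ : ℕ, p (k+1) * (lam ^ ℓ / (Nat.factorial ℓ : ℝ)) :=
          Summable.tsum_le_tsum (key1 k) (hshift k) ((Real.summable_pow_div_factorial lam).mul_left _)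
      _ = p (k+1) * Real.exp lam := by rw [tsum_mul_left, hexp]
  have hbound2 : ∀ k : ℕ, lam / ((k:ℝ)+2) < 1 → 1 - P k ≤ p (k+1) * (1 - lam / ((k:ℝ)+2))⁻¹ := by
    intro k hk
    have hr0 : 0 ≤ lam / ((k:ℝ)+2) := by positivity
    rw [htail]
    calc ∑' ℓ : ℕ, p (ℓ + (k+1))
        ≤ ∑' ℓ : ℕ, p (k+1) * (lam / ((k:ℝ)+2)) ^ ℓ :=
          Summable.tsum_le_tsum (key2 k) (hshift k)
            ((summable_geometric_of_lt_one hr0 hk).mul_left _)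
      _ = p (k+1) * (1 - lam / ((k:ℝ)+2))⁻¹ := by
          rw [tsum_mul_left, tsum_geometric_of_lt_one hr0 hk]
  have main : ∀ (k : ℕ) (B : ℝ), 1 - P k ≤ p (k+1) * B →
      |(p (k + 1) - p k) * (1 - P k) / (p k * p (k + 1))| ≤ |lam / (k + 1) - 1| * B := by
    intro k B hB
    have hpk := hpos k
    have hpk1 := hpos (k+1)
    have h1 : p (k+1) - p k = p k * (lam / ((k:ℝ)+1) - 1) := by rw [hsucc k]; ring
    rw [h1, abs_div, abs_mul, abs_mul, abs_of_pos hpk, abs_of_pos (mul_pos hpk hpk1),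
      abs_of_nonneg (htail_nonneg k)]
    rw [div_le_iff₀ (mul_pos hpk hpk1)]
    calc p k * |lam / ((k:ℝ)+1) - 1| * (1 - P k)
        ≤ p k * |lam / ((k:ℝ)+1) - 1| * (p (k+1) * B) := by
          apply mul_le_mul_of_nonneg_left hB
          positivity
      _ = |lam / ((k:ℝ)+1) - 1| * B * (p k * p (k+1)) := by ring
  constructor
  · refine ⟨(lam + 1) * Real.exp lam, fun k => (main k _ (hbound1 k)).trans ?_⟩
    have h0 : 0 ≤ lam / ((k:ℝ)+1) := by positivity
    have h1 : lam / ((k:ℝ)+1) ≤ lam := by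
      apply div_le_self hlam.le
      have : (0:ℝ) ≤ (k:ℝ) := Nat.cast_nonneg k
      linarith
    have habs : |lam / ((k:ℝ)+1) - 1| ≤ lam + 1 :=
      abs_le.mpr ⟨by linarith, by linarith⟩
    exact mul_le_mul_of_nonneg_right habs (Real.exp_nonneg lam)
  · intro k hk
    have := main k _ (hbound2 k hk)
    rwa [one_div]
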